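/- Fix n ≥ 2 and a partition λ = (λ_1 > λ_2 > … > λ_{n−1} > λ_n = 0) with distinct parts. Let 𝒯_{[n]}(λ) be the set of fillings σ of the Young diagram of λ with entries in {1,…,n} such that: (i) the rows of σ are weakly increasing; and (ii) σ(u) ≠ σ(v) whenever the cells u and v are attacking, i.e., they lie in the same column, or they lie in two consecutive columns with the right cell strictly below the left one. Then the map (w,T) ↦ σ(w,T) is a surjection from 𝒜(λ) onto 𝒯_{[n]}(λ): σ(w,T) ∈ 𝒯_{[n]}(λ) for every admissible pair (w,T), and every σ ∈ 𝒯_{[n]}(λ) equals σ(w,T) for some (w,T) ∈ 𝒜(λ). -/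

import Mathlib

/-- The conjugate partition: `conj n lam j` is the length `λ'_j` of the `j`-th column
(`j` being `1`-indexed) of the partition `λ = (lam 0, lam 1, …)`. -/
def conj (n : ℕ) (lam : ℕ → ℕ) (j : ℕ) : ℕ :=
  ((Finset.range n).filter fun i => j ≤ lam i).card

/-- The sequence of transpositions `Γ_{k,i} = ((i, k+1), (i, k+2), …, (i, n))`
(all entries `1`-indexed). -/
def GammaKI (n k i : ℕ) : List (ℕ × ℕ) :=
  (List.range (n - k)).map fun d => (i, k + 1 + d)

/-- The sequence of transpositions `Γ_k = Γ_{k,k} Γ_{k,k-1} ⋯ Γ_{k,1}`. -/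
def GammaK (n k : ℕ) : List (ℕ × ℕ) :=
  ((List.range k).map fun d => GammaKI n k (k - d)).flatten

/-- Right multiplication of the permutation `w` by the transpositions listed in `ts`,
in order: `w t_1 t_2 ⋯ t_m`. -/
def applyT (w : Equiv.Perm ℕ) (ts : List (ℕ × ℕ)) : Equiv.Perm ℕ :=
  ts.foldl (fun u p => u * Equiv.swap p.1 p.2) w

/-- The length (number of inversions) of a permutation of `{1, …, n}`. -/
def len (n : ℕ) (w : Equiv.Perm ℕ) : ℕ :=
  (((Finset.Icc 1 n) ×ˢ (Finset.Icc 1 n)).filter fun p => p.1 < p.2 ∧ w p.2 < w p.1).card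

/-- An admissible pair `(w, T)` for the partition `λ = (lam 0, …, lam (n-1))`:
`w` is a permutation of `{1, …, n}` (a permutation of `ℕ` fixing everything outside
`{1, …, n}`), and `T = T_1 T_2 ⋯ T_{λ_1}` where `T_j` is a subword of `Γ_{λ'_j}`, such
that the lengths `ℓ(w t_1 ⋯ t_i)` strictly increase along the concatenation
`t_1, …, t_m` of the `T_j`. -/
structure AdmissiblePair (n : ℕ) (lam : ℕ → ℕ) where
  w : Equiv.Perm ℕ
  T : List (List (ℕ × ℕ))
  hw : ∀ i, i = 0 ∨ n < i → w i = i
  hT : T.length = lam 0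
  hsub : ∀ j < T.length, (T.getD j []).Sublist (GammaK n (conj n lam (j + 1)))
  hchain : ∀ i < T.flatten.length,
    len n (applyT w (T.flatten.take i)) < len n (applyT w (T.flatten.take (i + 1)))

/-- The permutation `π_j = w T_1 ⋯ T_j` associated with an admissible pair. -/
def piCol {n : ℕ} {lam : ℕ → ℕ} (a : AdmissiblePair n lam) (j : ℕ) : Equiv.Perm ℕ :=
  applyT a.w ((a.T.take j).flatten)

/-- The filling `σ(w, T)` of the Young diagram of `λ` associated with an admissible pair:
the `j`-th column contains `π_j(1), …, π_j(λ'_j)` from top to bottom (rows and columns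
are `1`-indexed; the value is `0` outside the diagram). -/
def sigmaOf {n : ℕ} {lam : ℕ → ℕ} (a : AdmissiblePair n lam) : ℕ → ℕ → ℕ :=
  fun r c => if 1 ≤ r ∧ 1 ≤ c ∧ r ≤ conj n lam c then piCol a c r else 0

/-- `σ` is (the indicator-extension of) a semistandard Young tableau of shape `λ` with
entries in `{1, …, n}`: entries vanish outside the diagram, lie in `{1, …, n}` on the
diagram, rows weakly increase and columns strictly increase. -/
def IsSSYT (n : ℕ) (lam : ℕ → ℕ) (σ : ℕ → ℕ → ℕ) : Prop :=
  (∀ r c, ¬(1 ≤ r ∧ 1 ≤ c ∧ r ≤ conj n lam c) → σ r c = 0) ∧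
  (∀ r c, 1 ≤ r → 1 ≤ c → r ≤ conj n lam c → 1 ≤ σ r c ∧ σ r c ≤ n) ∧
  (∀ r c, 1 ≤ r → 1 ≤ c → r ≤ conj n lam (c + 1) → σ r c ≤ σ r (c + 1)) ∧
  (∀ r c, 1 ≤ r → 1 ≤ c → r + 1 ≤ conj n lam c → σ r c < σ (r + 1) c)

/-- `σ` is (the indicator-extension of) a filling of the Young diagram of `λ` with entries
in `{1, …, n}` whose rows weakly increase and in which any two attacking cells (two cells
in the same column, or cells in consecutive columns with the right one strictly below the
left one) have distinct entries. -/
def IsHHLFilling (n : ℕ) (lam : ℕ → ℕ) (σ : ℕ → ℕ → ℕ) : Prop :=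
  (∀ r c, ¬(1 ≤ r ∧ 1 ≤ c ∧ r ≤ conj n lam c) → σ r c = 0) ∧
  (∀ r c, 1 ≤ r → 1 ≤ c → r ≤ conj n lam c → 1 ≤ σ r c ∧ σ r c ≤ n) ∧
  (∀ r c, 1 ≤ r → 1 ≤ c → r ≤ conj n lam (c + 1) → σ r c ≤ σ r (c + 1)) ∧
  (∀ r r' c, 1 ≤ c → 1 ≤ r → 1 ≤ r' → r ≤ conj n lam c → r' ≤ conj n lam c →
    r ≠ r' → σ r c ≠ σ r' c) ∧
  (∀ r r' c, 1 ≤ c → 1 ≤ r → r ≤ conj n lam c → 1 ≤ r' → r' ≤ conj n lam (c + 1) →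
    r < r' → σ r c ≠ σ r' (c + 1))

namespace HHLProof


def psi (u : Equiv.Perm ℕ) (i j : ℕ) (p : ℕ × ℕ) : ℕ × ℕ :=
  if p.2 = i then (if u j < u p.1 then p else (p.1, j))
  else if p.1 = j then (if u p.2 < u i then p else (i, p.2))
  else p

def phi (u : Equiv.Perm ℕ) (i j : ℕ) (q : ℕ × ℕ) : ℕ × ℕ :=
  if q.2 = i then (q.1, i)
  else if q.2 = j then
    (if q.1 = i then (i, j) else if u j < u q.1 then (q.1, j) else (q.1, i))
  else if q.1 = j then (j, q.2)
  else if q.1 = i then (if u q.2 < u i then (i, q.2) else (j, q.2))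
  else q

theorem len_lt_len_mul_swap {n i j : ℕ} (u : Equiv.Perm ℕ) (hi : 1 ≤ i) (hij : i < j)
    (hj : j ≤ n) (h : u i < u j) : len n u < len n (u * Equiv.swap i j) := by
  classical
  set v := u * Equiv.swap i j with hv
  have hvi : v i = u j := by simp [hv, Equiv.Perm.mul_apply]
  have hvj : v j = u i := by simp [hv, Equiv.Perm.mul_apply]
  have hvx : ∀ x, x ≠ i → x ≠ j → v x = u x := fun x h1 h2 => by
    simp [hv, Equiv.Perm.mul_apply, Equiv.swap_apply_of_ne_of_ne h1 h2]
  have hne : i ≠ j := hij.ne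
  set F : Equiv.Perm ℕ → Finset (ℕ × ℕ) := fun w =>
    ((Finset.Icc 1 n) ×ˢ (Finset.Icc 1 n)).filter fun p => p.1 < p.2 ∧ w p.2 < w p.1
    with hF
  have hmemF : ∀ w p, p ∈ F w ↔ (1 ≤ p.1 ∧ p.1 ≤ n) ∧ (1 ≤ p.2 ∧ p.2 ≤ n)
      ∧ p.1 < p.2 ∧ w p.2 < w p.1 := by
    intro w p
    simp only [hF, Finset.mem_filter, Finset.mem_product, Finset.mem_Icc]
    tauto
  have key : ∀ p ∈ insert (i, j) (F u), psi u i j p ∈ F v ∧ phi u i j (psi u i j p) = p := by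
    intro p hp
    rcases Finset.mem_insert.mp hp with hp | hp
    · rw [hp]
      have hψ : psi u i j (i, j) = (i, j) := by simp [psi, hne, hne.symm]
      rw [hψ]
      constructor
      · rw [hmemF]
        exact ⟨⟨hi, le_of_lt (lt_of_lt_of_le hij hj)⟩, ⟨le_trans hi hij.le, hj⟩, hij,
          by rw [hvi, hvj]; exact h⟩
      · simp [phi, hne, hne.symm]
    · obtain ⟨a, b⟩ := p
      rw [hmemF] at hp
      obtain ⟨⟨ha1, ha2⟩, ⟨hb1, hb2⟩, hab, hinv⟩ := hp
      simp only at hab hinv ⊢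
      by_cases hbi : b = i
      · have hai : a ≠ i := by omega
        have haj : a ≠ j := by omega
        have hinvi : u i < u a := by rw [hbi] at hinv; exact hinv
        by_cases hc : u j < u a
        · have hψ : psi u i j (a, b) = (a, b) := by simp [psi, hbi, hc]
          rw [hψ]
          refine ⟨(hmemF v _).mpr ⟨⟨ha1, ha2⟩, ⟨hb1, hb2⟩, hab, ?_⟩, ?_⟩
          · rw [hbi, hvi, hvx a hai haj]; exact hc
          · simp [phi, hbi]
        · have hψ : psi u i j (a, b) = (a, j) := by simp [psi, hbi, hc]
          rw [hψ]
          refine ⟨(hmemF v _).mpr ⟨⟨ha1, ha2⟩, ⟨le_trans hi hij.le, hj⟩, by omega, ?_⟩, ?_⟩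
          · rw [hvj, hvx a hai haj]; exact hinvi
          · simp [phi, Ne.symm hne, hai, hc, hbi]
      · by_cases haj : a = j
        · have hbj : b ≠ j := by omega
          have hinvj : u b < u j := by rw [haj] at hinv; exact hinv
          by_cases hc : u b < u i
          · have hψ : psi u i j (a, b) = (a, b) := by simp [psi, hbi, haj, hc]
            rw [hψ]
            refine ⟨(hmemF v _).mpr ⟨⟨ha1, ha2⟩, ⟨hb1, hb2⟩, hab, ?_⟩, ?_⟩
            · rw [haj, hvj, hvx b hbi hbj]; exact hc
            · simp [phi, hbi, hbj, haj]
          · have hψ : psi u i j (a, b) = (i, b) := by simp [psi, hbi, haj, hc]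
            rw [hψ]
            refine ⟨(hmemF v _).mpr ⟨⟨hi, le_trans hij.le hj⟩, ⟨hb1, hb2⟩, by omega, ?_⟩, ?_⟩
            · rw [hvi, hvx b hbi hbj]; exact hinvj
            · simp [phi, hbi, hbj, hne, hc, haj]
        · have hψ : psi u i j (a, b) = (a, b) := by simp [psi, hbi, haj]
          rw [hψ]
          by_cases hai : a = i
          · have hbj : b ≠ j := by
              intro e; rw [hai, e] at hinv; omega
            have hinv' : u b < u i := by rw [hai] at hinv; exact hinv
            refine ⟨(hmemF v _).mpr ⟨⟨ha1, ha2⟩, ⟨hb1, hb2⟩, hab, ?_⟩, ?_⟩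
            · rw [hvx b hbi hbj, hai, hvi]; omega
            · simp [phi, hbi, hbj, haj, hinv', hai, hne, Ne.symm hne]
          · by_cases hbj : b = j
            · have hinv' : u j < u a := by rw [hbj] at hinv; exact hinv
              refine ⟨(hmemF v _).mpr ⟨⟨ha1, ha2⟩, ⟨hb1, hb2⟩, hab, ?_⟩, ?_⟩
              · rw [hbj, hvj, hvx a hai haj]; omega
              · simp [phi, hbi, hai, hinv', hbj, hne, Ne.symm hne]
            · refine ⟨(hmemF v _).mpr ⟨⟨ha1, ha2⟩, ⟨hb1, hb2⟩, hab, ?_⟩, ?_⟩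
              · rw [hvx a hai haj, hvx b hbi hbj]; exact hinv
              · simp [phi, hbi, hbj, hai, haj]
  have hnotmem : (i, j) ∉ F u := by
    intro hmem
    have := ((hmemF u (i, j)).mp hmem).2.2.2
    simp only at this
    omega
  have hcard : (insert (i, j) (F u)).card = (F u).card + 1 :=
    Finset.card_insert_of_notMem hnotmem
  have hle : (insert (i, j) (F u)).card ≤ (F v).card := by
    apply Finset.card_le_card_of_injOn (psi u i j)
    · exact fun p hp => (key p hp).1
    · intro p hp q hq hpq
      have := congrArg (phi u i j) hpq
      rwa [(key p (by exact_mod_cast hp)).2, (key q (by exact_mod_cast hq)).2] at this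
  have h1 : len n u = (F u).card := rfl
  have h2 : len n v = (F v).card := rfl
  omega

theorem len_mul_swap_iff {n i j : ℕ} (u : Equiv.Perm ℕ) (hi : 1 ≤ i) (hij : i < j)
    (hj : j ≤ n) : len n u < len n (u * Equiv.swap i j) ↔ u i < u j := by
  constructor
  · intro hl
    by_contra hc
    push_neg at hc
    have hne : u j ≠ u i := fun e => hij.ne' (u.injective e)
    have h2 : u j < u i := lt_of_le_of_ne hc hne
    have h3 : (u * Equiv.swap i j) i < (u * Equiv.swap i j) j := by
      simp [Equiv.Perm.mul_apply]; exact h2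
    have := len_lt_len_mul_swap (u * Equiv.swap i j) hi hij hj h3
    rw [mul_assoc, Equiv.swap_mul_self, mul_one] at this
    omega
  · exact len_lt_len_mul_swap u hi hij hj



lemma applyT_nil (w : Equiv.Perm ℕ) : applyT w [] = w := rfl
lemma applyT_cons (w : Equiv.Perm ℕ) (p : ℕ × ℕ) (l : List (ℕ × ℕ)) :
    applyT w (p :: l) = applyT (w * Equiv.swap p.1 p.2) l := rfl
lemma applyT_append (w : Equiv.Perm ℕ) (l₁ l₂ : List (ℕ × ℕ)) :
    applyT w (l₁ ++ l₂) = applyT (applyT w l₁) l₂ := List.foldl_append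

def VA (u : Equiv.Perm ℕ) (L : List (ℕ × ℕ)) : Prop :=
  ∀ m (h : m < L.length),
    applyT u (L.take m) (L.get ⟨m, h⟩).1 < applyT u (L.take m) (L.get ⟨m, h⟩).2

lemma VA_nil (u : Equiv.Perm ℕ) : VA u [] := fun _ h => absurd h (by simp)

lemma VA_cons {u : Equiv.Perm ℕ} {p : ℕ × ℕ} {L : List (ℕ × ℕ)} :
    VA u (p :: L) ↔ u p.1 < u p.2 ∧ VA (u * Equiv.swap p.1 p.2) L := by
  constructor
  · intro hva
    refine ⟨hva 0 (by simp), fun m h => ?_⟩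
    have := hva (m + 1) (by simpa using Nat.succ_lt_succ h)
    simpa [applyT_cons] using this
  · rintro ⟨h0, hva⟩ m h
    cases m with
    | zero => simpa [applyT_nil] using h0
    | succ m =>
      have := hva m (by simpa using Nat.lt_of_succ_lt_succ h)
      simpa [applyT_cons] using this

lemma VA_append {u : Equiv.Perm ℕ} {L₁ L₂ : List (ℕ × ℕ)} :
    VA u (L₁ ++ L₂) ↔ VA u L₁ ∧ VA (applyT u L₁) L₂ := by
  induction L₁ generalizing u with
  | nil => simp [applyT_nil, VA_nil, List.nil_append]
  | cons p L ih =>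
    rw [List.cons_append, VA_cons, VA_cons, ih, applyT_cons, and_assoc]

lemma applyT_eq_of_forall_ne (u : Equiv.Perm ℕ) {L : List (ℕ × ℕ)} {r : ℕ}
    (h : ∀ p ∈ L, p.1 ≠ r ∧ p.2 ≠ r) : applyT u L r = u r := by
  induction L generalizing u with
  | nil => rfl
  | cons p L ih =>
    rw [applyT_cons, ih _ fun q hq => h q (List.mem_cons_of_mem _ hq)]
    have hp := h p (List.mem_cons_self)
    simp [Equiv.Perm.mul_apply, Equiv.swap_apply_of_ne_of_ne (Ne.symm hp.1) (Ne.symm hp.2)]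

lemma le_applyT {u : Equiv.Perm ℕ} {L : List (ℕ × ℕ)} {r : ℕ}
    (h2 : ∀ p ∈ L, p.2 ≠ r) (hva : VA u L) : u r ≤ applyT u L r := by
  induction L generalizing u with
  | nil => exact le_rfl
  | cons p L ih =>
    rw [VA_cons] at hva
    rw [applyT_cons]
    refine le_trans ?_ (ih (fun q hq => h2 q (List.mem_cons_of_mem _ hq)) hva.2)
    by_cases hp1 : p.1 = r
    · rw [← hp1]
      simp only [Equiv.Perm.mul_apply, Equiv.swap_apply_left]
      exact hva.1.le
    · have hp2 := h2 p (List.mem_cons_self)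
      simp [Equiv.Perm.mul_apply, Equiv.swap_apply_of_ne_of_ne (Ne.symm hp1) (Ne.symm hp2)]

lemma applyT_ne_of_lt {u : Equiv.Perm ℕ} {L : List (ℕ × ℕ)} {k r r' : ℕ}
    (hb : ∀ p ∈ L, p.1 ≤ k ∧ k < p.2) (hpw : L.Pairwise fun p q => q.1 ≤ p.1)
    (hr : r < r') (hr' : r' ≤ k) : applyT u L r' ≠ u r := by
  induction L generalizing u with
  | nil =>
    rw [applyT_nil]
    exact fun e => absurd (u.injective e) (by omega)
  | cons p L ih =>
    rcases le_or_gt r' p.1 with hc | hc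
    · rw [applyT_cons]
      have heq : (u * Equiv.swap p.1 p.2) r = u r := by
        have h2 := (hb p (List.mem_cons_self)).2
        have h1 : r ≠ p.1 := by omega
        have h2' : r ≠ p.2 := by omega
        simp [Equiv.Perm.mul_apply, Equiv.swap_apply_of_ne_of_ne h1 h2']
      rw [← heq]
      exact ih (fun q hq => hb q (List.mem_cons_of_mem _ hq)) (List.Pairwise.of_cons hpw) 
    · have hfix : applyT u (p :: L) r' = u r' := by
        apply applyT_eq_of_forall_ne
        intro q hq
        rcases List.mem_cons.mp hq with rfl | hq
        · have h2 := (hb q (List.mem_cons_self)).2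
          exact ⟨by omega, by omega⟩
        · have hq1 : q.1 ≤ p.1 := (List.pairwise_cons.mp hpw).1 q hq
          have h2 := (hb q (List.mem_cons_of_mem _ hq)).2
          exact ⟨by omega, by omega⟩
      rw [hfix]
      exact fun e => absurd (u.injective e) (by omega)

lemma pairwise_of_forall {α : Type*} {R : α → α → Prop} (l : List α) (h : ∀ a b, R a b) :
    l.Pairwise R := by
  induction l with
  | nil => exact List.Pairwise.nil
  | cons a l ih => exact List.Pairwise.cons (fun b _ => h a b) ih

lemma mem_GammaKI {n k i : ℕ} {p : ℕ × ℕ} : p ∈ GammaKI n k i ↔ p.1 = i ∧ k < p.2 ∧ p.2 ≤ n := by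
  simp only [GammaKI, List.mem_map, List.mem_range]
  constructor
  · rintro ⟨d, hd, rfl⟩
    simp; omega
  · rintro ⟨h1, h2, h3⟩
    refine ⟨p.2 - (k + 1), by omega, ?_⟩
    rw [← h1]
    have : k + 1 + (p.2 - (k + 1)) = p.2 := by omega
    rw [this]

def GammaLow (n k m : ℕ) : List (ℕ × ℕ) :=
  ((List.range m).map fun d => GammaKI n k (m - d)).flatten

lemma GammaLow_eq (n k : ℕ) : GammaLow n k k = GammaK n k := rfl

lemma GammaLow_zero (n k : ℕ) : GammaLow n k 0 = [] := rfl

lemma GammaLow_succ (n k m : ℕ) :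
    GammaLow n k (m + 1) = GammaKI n k (m + 1) ++ GammaLow n k m := by
  unfold GammaLow
  rw [List.range_succ_eq_map, List.map_cons, List.flatten_cons, List.map_map]
  congr 2
  refine List.map_congr_left fun d _ => ?_
  simp only [Function.comp]
  congr 1
  omega

lemma mem_GammaLow {n k m : ℕ} {p : ℕ × ℕ} (h : p ∈ GammaLow n k m) :
    1 ≤ p.1 ∧ p.1 ≤ m ∧ k < p.2 ∧ p.2 ≤ n := by
  induction m with
  | zero => simp [GammaLow_zero] at h
  | succ m ih =>
    rw [GammaLow_succ, List.mem_append] at h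
    rcases h with h | h
    · obtain ⟨h1, h2, h3⟩ := mem_GammaKI.mp h
      omega
    · have := ih h
      omega

lemma mem_GammaK {n k : ℕ} {p : ℕ × ℕ} (h : p ∈ GammaK n k) :
    1 ≤ p.1 ∧ p.1 ≤ k ∧ k < p.2 ∧ p.2 ≤ n :=
  mem_GammaLow ((GammaLow_eq n k) ▸ h)

lemma pairwise_GammaLow (n k m : ℕ) :
    (GammaLow n k m).Pairwise fun p q => q.1 ≤ p.1 := by
  induction m with
  | zero => rw [GammaLow_zero]; exact List.Pairwise.nil
  | succ m ih =>
    rw [GammaLow_succ, List.pairwise_append]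
    refine ⟨?_, ih, ?_⟩
    · exact (List.pairwise_map).mpr (pairwise_of_forall _ fun a b => le_rfl)
    · intro p hp q hq
      have h1 := (mem_GammaKI.mp hp).1
      have h2 := (mem_GammaLow hq).2.1
      omega

lemma pairwise_GammaK (n k : ℕ) : (GammaK n k).Pairwise fun p q => q.1 ≤ p.1 :=
  (GammaLow_eq n k) ▸ pairwise_GammaLow n k k


lemma chain_iff_VA {n : ℕ} (w : Equiv.Perm ℕ) (L : List (ℕ × ℕ))
    (hB : ∀ p ∈ L, 1 ≤ p.1 ∧ p.1 < p.2 ∧ p.2 ≤ n) :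
    (∀ m < L.length, len n (applyT w (L.take m)) < len n (applyT w (L.take (m + 1)))) ↔
      VA w L := by
  have key : ∀ m (h : m < L.length),
      (len n (applyT w (L.take m)) < len n (applyT w (L.take (m + 1))) ↔
        applyT w (L.take m) (L.get ⟨m, h⟩).1 < applyT w (L.take m) (L.get ⟨m, h⟩).2) := by
    intro m h
    have ht : L.take (m + 1) = L.take m ++ [L.get ⟨m, h⟩] := by
      rw [List.take_succ]
      congr
      rw [List.getElem?_eq_getElem h]
      rfl
    rw [ht, applyT_append, applyT_cons, applyT_nil]
    obtain ⟨h1, h2, h3⟩ := hB _ (List.get_mem L ⟨m, h⟩)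
    exact len_mul_swap_iff _ h1 h2 h3
  constructor
  · intro hc m h; exact (key m h).mp (hc m h)
  · intro hva m h; exact (key m h).mpr (hva m h)

def FixOut (n : ℕ) (u : Equiv.Perm ℕ) : Prop := ∀ i, i = 0 ∨ n < i → u i = i

lemma FixOut.mem_range {n : ℕ} {u : Equiv.Perm ℕ} (h : FixOut n u) {r : ℕ}
    (h1 : 1 ≤ r) (h2 : r ≤ n) : 1 ≤ u r ∧ u r ≤ n := by
  by_contra hc
  have : u r = 0 ∨ n < u r := by omega
  rcases this with h0 | hgt
  · have hz := h 0 (Or.inl rfl)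
    have := u.injective (h0.trans hz.symm)
    omega
  · have := u.injective (h (u r) (Or.inr hgt))
    omega

lemma FixOut.mul_swap {n : ℕ} {u : Equiv.Perm ℕ} {a b : ℕ} (h : FixOut n u)
    (ha1 : 1 ≤ a) (ha2 : a ≤ n) (hb1 : 1 ≤ b) (hb2 : b ≤ n) :
    FixOut n (u * Equiv.swap a b) := by
  intro x hx
  have hxa : x ≠ a := by omega
  have hxb : x ≠ b := by omega
  simp only [Equiv.Perm.mul_apply, Equiv.swap_apply_of_ne_of_ne hxa hxb]
  exact h x hx

lemma FixOut.applyT {n : ℕ} {u : Equiv.Perm ℕ} {L : List (ℕ × ℕ)} (h : FixOut n u)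
    (hL : ∀ p ∈ L, 1 ≤ p.1 ∧ p.1 ≤ n ∧ 1 ≤ p.2 ∧ p.2 ≤ n) : FixOut n (applyT u L) := by
  induction L generalizing u with
  | nil => rw [applyT_nil]; exact h
  | cons p L ih =>
    rw [applyT_cons]
    obtain ⟨h1, h2, h3, h4⟩ := hL p (List.mem_cons_self)
    exact ih (h.mul_swap h1 h2 h3 h4) fun q hq => hL q (List.mem_cons_of_mem _ hq)

lemma FixOut.symm {n : ℕ} {u : Equiv.Perm ℕ} (h : FixOut n u) : FixOut n u.symm := by
  intro i hi
  conv_lhs => rw [← h i hi]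
  exact u.symm_apply_apply i

lemma conj_le (n : ℕ) (lam : ℕ → ℕ) (j : ℕ) : conj n lam j ≤ n :=
  le_trans (Finset.card_filter_le _ _) (by simp)

lemma conj_antitone (n : ℕ) (lam : ℕ → ℕ) {j j' : ℕ} (h : j ≤ j') :
    conj n lam j' ≤ conj n lam j := by
  apply Finset.card_le_card
  intro i hi
  simp only [Finset.mem_filter, Finset.mem_range] at hi ⊢
  exact ⟨hi.1, le_trans h hi.2⟩

section
variable {n : ℕ} {lam : ℕ → ℕ} (hn : 2 ≤ n)
    (hdec : ∀ i, i + 1 < n → lam (i + 1) < lam i) (hzero : ∀ i, n - 1 ≤ i → lam i = 0)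

include hdec hzero in
lemma lam_le_lam_zero : ∀ i, lam i ≤ lam 0 := by
  intro i
  induction i with
  | zero => exact le_rfl
  | succ i ih =>
    by_cases hi : i + 1 < n
    · exact le_trans (hdec i hi).le ih
    · rw [hzero (i + 1) (by omega)]; exact Nat.zero_le _
include hn hdec hzero in
lemma conj_pos_iff (c : ℕ) : 1 ≤ conj n lam c ↔ c ≤ lam 0 := by
  unfold conj
  constructor
  · intro h
    obtain ⟨i, hi⟩ := Finset.card_pos.mp h
    simp only [Finset.mem_filter, Finset.mem_range] at hi
    exact le_trans hi.2 (lam_le_lam_zero hdec hzero i)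
  · intro h
    exact Finset.card_pos.mpr
      ⟨0, by simp only [Finset.mem_filter, Finset.mem_range]; exact ⟨by omega, h⟩⟩
end
lemma bnd_flatten {n : ℕ} {T : List (List (ℕ × ℕ))} {k : ℕ → ℕ}
    (hsub : ∀ j < T.length, (T.getD j []).Sublist (GammaK n (k j))) :
    ∀ p ∈ T.flatten, 1 ≤ p.1 ∧ p.1 < p.2 ∧ p.2 ≤ n := by
  intro p hp
  obtain ⟨l, hl, hpl⟩ := List.mem_flatten.mp hp
  obtain ⟨j, hj, rfl⟩ := List.mem_iff_getElem.mp hl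
  have hgd : T.getD j [] = T[j] := List.getD_eq_getElem T [] hj
  have := mem_GammaK ((hsub j hj).subset (hgd ▸ hpl))
  exact ⟨this.1, by omega, this.2.2.2⟩

lemma mem_flatten_take {T : List (List (ℕ × ℕ))} {c : ℕ} {p : ℕ × ℕ}
    (hp : p ∈ (T.take c).flatten) : p ∈ T.flatten := by
  obtain ⟨l, hl, hpl⟩ := List.mem_flatten.mp hp
  exact List.mem_flatten.mpr ⟨l, List.take_subset c T hl, hpl⟩

lemma flatten_take_succ (T : List (List (ℕ × ℕ))) (c : ℕ) :
    (T.take (c + 1)).flatten = (T.take c).flatten ++ T.getD c [] := by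
  rcases lt_or_ge c T.length with h | h
  · rw [List.take_succ, List.flatten_append, List.getElem?_eq_getElem h,
      List.getD_eq_getElem T [] h]
    simp
  · rw [List.take_of_length_le h, List.take_of_length_le (by omega),
      List.getD_eq_default _ _ h]
    simp

lemma VA_col {w : Equiv.Perm ℕ} {T : List (List (ℕ × ℕ))} (hVA : VA w T.flatten) (c : ℕ) :
    VA (applyT w (T.take c).flatten) (T.getD c []) := by
  have hdecomp : T.flatten = (T.take c).flatten ++ (T.getD c [] ++ (T.drop (c + 1)).flatten) := by
    conv_lhs => rw [← List.take_append_drop (c + 1) T]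
    rw [List.flatten_append, flatten_take_succ, List.append_assoc]
  rw [hdecomp] at hVA
  exact (VA_append.mp ((VA_append.mp hVA).2)).1

lemma piCol_succ {n : ℕ} {lam : ℕ → ℕ} (a : AdmissiblePair n lam) (c : ℕ) :
    piCol a (c + 1) = applyT (piCol a c) (a.T.getD c []) := by
  unfold piCol
  rw [flatten_take_succ, applyT_append]

section Forward
variable {n : ℕ} {lam : ℕ → ℕ} (hn : 2 ≤ n)
    (hdec : ∀ i, i + 1 < n → lam (i + 1) < lam i) (hzero : ∀ i, n - 1 ≤ i → lam i = 0)

include hn hdec hzero in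
theorem forward (a : AdmissiblePair n lam) : IsHHLFilling n lam (sigmaOf a) := by
  have hbnd : ∀ p ∈ a.T.flatten, 1 ≤ p.1 ∧ p.1 < p.2 ∧ p.2 ≤ n := bnd_flatten a.hsub
  have hVA : VA a.w a.T.flatten := (chain_iff_VA a.w a.T.flatten hbnd).mp a.hchain
  have hfix : ∀ c, FixOut n (piCol a c) := by
    intro c
    refine FixOut.applyT a.hw fun p hp => ?_
    have := hbnd p (mem_flatten_take hp)
    exact ⟨this.1, by omega, by omega, this.2.2⟩
  have hVAcol : ∀ c, VA (piCol a c) (a.T.getD c []) := fun c => VA_col hVA c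
  have hclen : ∀ c r, 1 ≤ r → r ≤ conj n lam (c + 1) → c < a.T.length := by
    intro c r h1 h2
    have := (conj_pos_iff hn hdec hzero (c + 1)).mp (le_trans h1 h2)
    have hT := a.hT
    omega
  refine ⟨?_, ?_, ?_, ?_, ?_⟩
  · intro r c h
    simp only [sigmaOf, if_neg h]
  · intro r c hr hc hrc
    have hcond : 1 ≤ r ∧ 1 ≤ c ∧ r ≤ conj n lam c := ⟨hr, hc, hrc⟩
    simp only [sigmaOf]
    rw [if_pos hcond]
    exact (hfix c).mem_range hr (le_trans hrc (conj_le n lam c))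
  · intro r c hr hc hrc
    have h1 : r ≤ conj n lam c := le_trans hrc (conj_antitone n lam (Nat.le_succ c))
    have hcl : c < a.T.length := hclen c r hr hrc
    have hcond1 : 1 ≤ r ∧ 1 ≤ c ∧ r ≤ conj n lam c := ⟨hr, hc, h1⟩
    have hcond2 : 1 ≤ r ∧ 1 ≤ c + 1 ∧ r ≤ conj n lam (c + 1) := ⟨hr, Nat.le_succ_of_le hc, hrc⟩
    simp only [sigmaOf]
    rw [if_pos hcond1, if_pos hcond2, piCol_succ]
    refine le_applyT (fun p hp => ?_) (hVAcol c)
    have := mem_GammaK ((a.hsub c hcl).subset hp)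
    omega
  · intro r r' c hc hr hr' hrc hr'c hne
    have hcond1 : 1 ≤ r ∧ 1 ≤ c ∧ r ≤ conj n lam c := ⟨hr, hc, hrc⟩
    have hcond2 : 1 ≤ r' ∧ 1 ≤ c ∧ r' ≤ conj n lam c := ⟨hr', hc, hr'c⟩
    simp only [sigmaOf]
    rw [if_pos hcond1, if_pos hcond2]
    exact fun e => hne ((piCol a c).injective e)
  · intro r r' c hc hr hrc hr' hr'c hlt
    have hcl : c < a.T.length := hclen c r' hr' hr'c
    have hcond1 : 1 ≤ r ∧ 1 ≤ c ∧ r ≤ conj n lam c := ⟨hr, hc, hrc⟩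
    have hcond2 : 1 ≤ r' ∧ 1 ≤ c + 1 ∧ r' ≤ conj n lam (c + 1) :=
      ⟨hr', Nat.le_succ_of_le hc, hr'c⟩
    simp only [sigmaOf]
    rw [if_pos hcond1, if_pos hcond2, piCol_succ]
    refine Ne.symm (applyT_ne_of_lt (fun p hp => ?_) ?_ hlt hr'c)
    · have := mem_GammaK ((a.hsub c hcl).subset hp)
      omega
    · exact ((pairwise_GammaK n _).sublist (a.hsub c hcl))

end Forward

section Construct
variable {n : ℕ}

lemma stepLow (k : ℕ) (hk : k ≤ n) (b : ℕ → ℕ)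
    (hbr : ∀ r, 1 ≤ r → r ≤ k → 1 ≤ b r ∧ b r ≤ n)
    (hbinj : ∀ r r', 1 ≤ r → r ≤ k → 1 ≤ r' → r' ≤ k → r ≠ r' → b r ≠ b r') :
    ∀ m, m ≤ k → ∀ u : Equiv.Perm ℕ, FixOut n u →
      (∀ r, 1 ≤ r → r ≤ m → u r ≤ b r) →
      (∀ r r', 1 ≤ r → r < r' → r' ≤ m → b r' ≠ u r) →
      (∀ r, m < r → r ≤ k → u r = b r) →
      ∃ T : List (ℕ × ℕ), T.Sublist (GammaLow n k m) ∧ VA u T ∧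
        ∀ r, 1 ≤ r → r ≤ k → applyT u T r = b r := by
  intro m
  induction m with
  | zero =>
    intro _ u _ _ _ heq
    exact ⟨[], List.nil_sublist _, VA_nil u,
      fun r h1 h2 => by rw [applyT_nil]; exact heq r h1 h2⟩
  | succ m ih =>
    intro hmk u hfix hmono hatt heq
    by_cases hcase : u (m + 1) = b (m + 1)
    · obtain ⟨T, hT1, hT2, hT3⟩ := ih (by omega) u hfix
        (fun r h1 h2 => hmono r h1 (by omega))
        (fun r r' h1 h2 h3 => hatt r r' h1 h2 (by omega))
        (fun r h1 h2 => by
          rcases eq_or_ne r (m + 1) with rfl | hne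
          · exact hcase
          · exact heq r (by omega) h2)
      exact ⟨T, (GammaLow_succ n k m) ▸ (hT1.trans (List.sublist_append_right _ _)),
        hT2, hT3⟩
    · have hlt : u (m + 1) < b (m + 1) :=
        lt_of_le_of_ne (hmono (m + 1) (by omega) le_rfl) hcase
      set pos := u.symm (b (m + 1)) with hposdef
      have hupos : u pos = b (m + 1) := u.apply_symm_apply _
      have hb1 := hbr (m + 1) (by omega) hmk
      have hposn : 1 ≤ pos ∧ pos ≤ n := (hfix.symm).mem_range hb1.1 hb1.2
      have hposk : k < pos := by
        by_contra hle
        push_neg at hle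
        rcases lt_or_ge pos (m + 1) with hc2 | hc2
        · exact hatt pos (m + 1) hposn.1 hc2 le_rfl hupos.symm
        · rcases eq_or_lt_of_le hc2 with hc3 | hc3
          · rw [← hc3] at hupos
            exact hcase hupos
          · have heqp := heq pos hc3 hle
            exact hbinj pos (m + 1) (by omega) hle (by omega) hmk (by omega)
              (heqp.symm.trans hupos)
      set u' := u * Equiv.swap (m + 1) pos with hu'def
      have hu'm : u' (m + 1) = b (m + 1) := by
        rw [hu'def]
        simp only [Equiv.Perm.mul_apply, Equiv.swap_apply_left]
        exact hupos
      have hu'r : ∀ r, r ≠ m + 1 → r ≠ pos → u' r = u r := by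
        intro r h1 h2
        rw [hu'def]
        simp [Equiv.Perm.mul_apply, Equiv.swap_apply_of_ne_of_ne h1 h2]
      have hfix' : FixOut n u' := hfix.mul_swap (by omega) (by omega) hposn.1 hposn.2
      obtain ⟨T, hT1, hT2, hT3⟩ := ih (by omega) u' hfix'
        (fun r h1 h2 => by
          rw [hu'r r (by omega) (by omega)]
          exact hmono r h1 (by omega))
        (fun r r' h1 h2 h3 => by
          rw [hu'r r (by omega) (by omega)]
          exact hatt r r' h1 h2 (by omega))
        (fun r h1 h2 => by
          rcases eq_or_ne r (m + 1) with rfl | hne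
          · exact hu'm
          · rw [hu'r r hne (by omega)]
            exact heq r (by omega) h2)
      refine ⟨(m + 1, pos) :: T, ?_, ?_, ?_⟩
      · rw [GammaLow_succ]
        have hmem : (m + 1, pos) ∈ GammaKI n k (m + 1) :=
          mem_GammaKI.mpr ⟨rfl, hposk, hposn.2⟩
        exact (List.singleton_sublist.mpr hmem).append hT1
      · rw [VA_cons]
        refine ⟨?_, hT2⟩
        show u (m + 1) < u pos
        rw [hupos]
        exact hlt
      · intro r h1 h2
        rw [applyT_cons]
        exact hT3 r h1 h2

lemma stepCol (k : ℕ) (hk : k ≤ n) (u : Equiv.Perm ℕ) (hfix : FixOut n u) (b : ℕ → ℕ)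
    (hbr : ∀ r, 1 ≤ r → r ≤ k → 1 ≤ b r ∧ b r ≤ n)
    (hbinj : ∀ r r', 1 ≤ r → r ≤ k → 1 ≤ r' → r' ≤ k → r ≠ r' → b r ≠ b r')
    (hmono : ∀ r, 1 ≤ r → r ≤ k → u r ≤ b r)
    (hatt : ∀ r r', 1 ≤ r → r < r' → r' ≤ k → b r' ≠ u r) :
    ∃ T : List (ℕ × ℕ), T.Sublist (GammaK n k) ∧ VA u T ∧
      ∀ r, 1 ≤ r → r ≤ k → applyT u T r = b r := by
  obtain ⟨T, h1, h2, h3⟩ := stepLow k hk b hbr hbinj k le_rfl u hfix hmono hatt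
    (fun r hr1 hr2 => absurd hr1 (by omega))
  exact ⟨T, (GammaLow_eq n k) ▸ h1, h2, h3⟩

lemma extendPerm (k : ℕ) (hk : k ≤ n) (f : ℕ → ℕ)
    (hf : ∀ r, 1 ≤ r → r ≤ k → 1 ≤ f r ∧ f r ≤ n)
    (hinj : ∀ r r', 1 ≤ r → r ≤ k → 1 ≤ r' → r' ≤ k → r ≠ r' → f r ≠ f r') :
    ∃ w : Equiv.Perm ℕ, FixOut n w ∧ ∀ r, 1 ≤ r → r ≤ k → w r = f r := by
  have aux : ∀ m, m ≤ k → ∃ w : Equiv.Perm ℕ, FixOut n w ∧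
      ∀ r, 1 ≤ r → r ≤ m → w r = f r := by
    intro m
    induction m with
    | zero => exact fun _ => ⟨1, fun i _ => rfl, fun r h1 h2 => absurd h1 (by omega)⟩
    | succ m ih =>
      intro hmk
      obtain ⟨w, hw, hvals⟩ := ih (by omega)
      set pos := w.symm (f (m + 1)) with hposdef
      have hupos : w pos = f (m + 1) := w.apply_symm_apply _
      have hb1 := hf (m + 1) (by omega) hmk
      have hposn : 1 ≤ pos ∧ pos ≤ n := (hw.symm).mem_range hb1.1 hb1.2
      have hposm : ¬ pos ≤ m := by
        intro hle
        have heqp := hvals pos hposn.1 hle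
        exact hinj pos (m + 1) hposn.1 (by omega) (by omega) hmk (by omega)
          (heqp.symm.trans hupos)
      rcases eq_or_ne pos (m + 1) with hc | hc
      · refine ⟨w, hw, fun r h1 h2 => ?_⟩
        rcases eq_or_ne r (m + 1) with rfl | hne
        · exact hc ▸ hupos
        · exact hvals r h1 (by omega)
      · have hposgt : m + 1 < pos := by omega
        refine ⟨w * Equiv.swap (m + 1) pos,
          hw.mul_swap (by omega) (by omega) hposn.1 hposn.2, fun r h1 h2 => ?_⟩
        rcases eq_or_ne r (m + 1) with rfl | hne
        · simp only [Equiv.Perm.mul_apply, Equiv.swap_apply_left]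
          exact hupos
        · have hne2 : r ≠ pos := by omega
          simp only [Equiv.Perm.mul_apply, Equiv.swap_apply_of_ne_of_ne hne hne2]
          exact hvals r h1 (by omega)
  exact aux k le_rfl

lemma getD_append_lt (Ts : List (List (ℕ × ℕ))) (Tn : List (ℕ × ℕ)) (j : ℕ)
    (h : j < Ts.length) : (Ts ++ [Tn]).getD j [] = Ts.getD j [] := by
  rw [List.getD_eq_getElem _ _ (by simp; omega), List.getD_eq_getElem _ _ h]
  exact List.getElem_append_left h

lemma getD_append_last (Ts : List (List (ℕ × ℕ))) (Tn : List (ℕ × ℕ)) :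
    (Ts ++ [Tn]).getD Ts.length [] = Tn := by
  rw [List.getD_eq_getElem _ _ (by simp)]
  simp

variable {lam : ℕ → ℕ} {σ : ℕ → ℕ → ℕ} (hn : 2 ≤ n)
    (hdec : ∀ i, i + 1 < n → lam (i + 1) < lam i) (hzero : ∀ i, n - 1 ≤ i → lam i = 0)
    (hσ : IsHHLFilling n lam σ)

include hσ in
lemma build : ∀ c, 1 ≤ c → c ≤ lam 0 →
    ∃ (w : Equiv.Perm ℕ) (Ts : List (List (ℕ × ℕ))),
      FixOut n w ∧ Ts.length = c ∧
      (∀ j < c, (Ts.getD j []).Sublist (GammaK n (conj n lam (j + 1)))) ∧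
      VA w Ts.flatten ∧
      (∀ j, 1 ≤ j → j ≤ c → ∀ r, 1 ≤ r → r ≤ conj n lam j →
        applyT w ((Ts.take j).flatten) r = σ r j) := by
  obtain ⟨hzout, hrange, hrow, hcoldist, hatt⟩ := hσ
  intro c
  induction c with
  | zero => intro h; omega
  | succ c ih =>
    intro _ hc1
    rcases Nat.eq_zero_or_pos c with rfl | hcpos
    · obtain ⟨w, hw, hvals⟩ := extendPerm (conj n lam 1) (conj_le n lam 1)
        (fun r => σ r 1)
        (fun r h1 h2 => hrange r 1 h1 le_rfl h2)
        (fun r r' h1 h2 h3 h4 h5 => hcoldist r r' 1 le_rfl h1 h3 h2 h4 h5)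
      refine ⟨w, [[]], hw, rfl, ?_, ?_, ?_⟩
      · intro j hj
        have hj0 : j = 0 := by omega
        rw [hj0]
        exact List.nil_sublist _
      · show VA w [[]].flatten
        have hfl : ([[]] : List (List (ℕ × ℕ))).flatten = [] := by simp
        rw [hfl]
        exact VA_nil w
      · intro j h1 h2 r hr1 hr2
        have hj1 : j = 1 := by omega
        subst hj1
        have hfl : (([[]] : List (List (ℕ × ℕ))).take 1).flatten = [] := by simp
        rw [hfl, applyT_nil]
        exact hvals r hr1 hr2
    · obtain ⟨w, Ts, hw, hlen, hsub, hVA, hvals⟩ := ih hcpos (by omega)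
      set k := conj n lam (c + 1) with hkdef
      have hk : k ≤ n := conj_le n lam (c + 1)
      set π := applyT w Ts.flatten with hπdef
      have htake : Ts.take c = Ts := List.take_of_length_le (by omega)
      have hπvals : ∀ r, 1 ≤ r → r ≤ conj n lam c → π r = σ r c := by
        intro r h1 h2
        have hx := hvals c hcpos le_rfl r h1 h2
        rw [htake] at hx
        exact hx
      have hbndTs : ∀ p ∈ Ts.flatten, 1 ≤ p.1 ∧ p.1 < p.2 ∧ p.2 ≤ n := by
        refine bnd_flatten (k := fun j => conj n lam (j + 1)) ?_
        intro j hj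
        exact hsub j (by omega)
      have hfixπ : FixOut n π := hw.applyT fun p hp => by
        have hx := hbndTs p hp
        exact ⟨hx.1, by omega, by omega, hx.2.2⟩
      have hkc : k ≤ conj n lam c := conj_antitone n lam (Nat.le_succ c)
      obtain ⟨Tn, hTnsub, hTnVA, hTnvals⟩ := stepCol k hk π hfixπ (fun r => σ r (c + 1))
        (fun r h1 h2 => hrange r (c + 1) h1 (by omega) h2)
        (fun r r' h1 h2 h3 h4 h5 =>
          hcoldist r r' (c + 1) (by omega) h1 h3 h2 h4 h5)
        (fun r h1 h2 => by
          rw [hπvals r h1 (le_trans h2 hkc)]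
          exact hrow r c h1 hcpos h2)
        (fun r r' h1 h2 h3 => by
          rw [hπvals r h1 (le_trans (le_trans h2.le h3) hkc)]
          exact (hatt r r' c hcpos h1 (le_trans (le_trans h2.le h3) hkc) (by omega) h3 h2).symm)
      refine ⟨w, Ts ++ [Tn], hw, by simp [hlen], ?_, ?_, ?_⟩
      · intro j hj
        rcases lt_or_ge j c with hjc | hjc
        · rw [getD_append_lt Ts Tn j (by omega)]
          exact hsub j hjc
        · have hjc' : j = c := by omega
          subst hjc'
          rw [← hlen, getD_append_last]
          rw [hlen]
          exact hTnsub
      · rw [List.flatten_append]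
        have hfl : ([Tn] : List (List (ℕ × ℕ))).flatten = Tn := by simp
        rw [hfl]
        exact VA_append.mpr ⟨hVA, hTnVA⟩
      · intro j h1 h2 r hr1 hr2
        rcases le_or_gt j c with hjc | hjc
        · rw [List.take_append_of_le_length (by omega)]
          exact hvals j h1 hjc r hr1 hr2
        · have hjc' : j = c + 1 := by omega
          subst hjc'
          rw [List.take_of_length_le (by simp [hlen]), List.flatten_append]
          have hfl : ([Tn] : List (List (ℕ × ℕ))).flatten = Tn := by simp
          rw [hfl, applyT_append]
          exact hTnvals r hr1 hr2

end Construct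

end HHLProof

/-- First compression of the Ram–Yip formula for Hall–Littlewood polynomials (for `λ` with
distinct parts): the map `(w, T) ↦ σ(w, T)` is a surjection from the set of admissible
pairs onto the set of fillings `𝒯_{[n]}(λ)` appearing in the Haglund–Haiman–Loehr formula. -/
theorem alcove_surjection_HHL_fillings (n : ℕ) (hn : 2 ≤ n) (lam : ℕ → ℕ)
    (hdec : ∀ i, i + 1 < n → lam (i + 1) < lam i)
    (hzero : ∀ i, n - 1 ≤ i → lam i = 0) :
    (∀ a : AdmissiblePair n lam, IsHHLFilling n lam (sigmaOf a)) ∧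
    (∀ σ : ℕ → ℕ → ℕ, IsHHLFilling n lam σ →
      ∃ a : AdmissiblePair n lam, sigmaOf a = σ) := by
  constructor
  · exact fun a => HHLProof.forward hn hdec hzero a
  · intro σ hσ
    have hlam1 : 1 ≤ lam 0 := by
      have := hdec 0 (by omega)
      omega
    obtain ⟨w, Ts, hw, hlen, hsub, hVA, hvals⟩ :=
      HHLProof.build hσ (lam 0) hlam1 le_rfl
    have hbnd : ∀ p ∈ Ts.flatten, 1 ≤ p.1 ∧ p.1 < p.2 ∧ p.2 ≤ n := by
      refine HHLProof.bnd_flatten (k := fun j => conj n lam (j + 1)) ?_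
      intro j hj
      exact hsub j (by omega)
    refine ⟨⟨w, Ts, hw, hlen, ?_, ?_⟩, ?_⟩
    · intro j hj
      exact hsub j (by omega)
    · exact (HHLProof.chain_iff_VA w Ts.flatten hbnd).mpr hVA
    · funext r c
      simp only [sigmaOf]
      split_ifs with h
      · obtain ⟨hr, hc, hrc⟩ := h
        have hcle : c ≤ lam 0 :=
          (HHLProof.conj_pos_iff hn hdec hzero c).mp (le_trans hr hrc)
        exact hvals c hc hcle r hr hrc
      · exact (hσ.1 r c h).symm
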